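/- For n ≥ 2, the kernel of the linear map Ac = Σ_k A_k ⊗ c_k : 𝓗¹⊗S² → 𝓗⁰⊗S³ has dimension n·C(n+1,2) − C(n+2,3), and the subspace K^{1,2} = ker(Aa) ∩ ker(Ac) ⊆ 𝓗¹⊗S² has dimension n·C(n+1,2) − C(n+2,3) − n; for n = 1 this intersection is zero. -/

import Mathlib

open MvPolynomial

/-- The physicists' Hermite polynomial `H_k`, satisfying the Rodrigues formula
`H_k(t) = (−1)^k e^{t²} (d/dt)^k e^{−t²}` (equivalently, `H_0 = 1`,
`H_{k+1} = 2X·H_k − H_k'`). -/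
noncomputable def physHermite : ℕ → Polynomial ℝ
  | 0 => 1
  | (k + 1) => 2 * (Polynomial.X * physHermite k) - Polynomial.derivative (physHermite k)

/-- The Hermite polynomial `H_I = H_{i₁}(y₁)⋯H_{iₙ}(yₙ)`, as a polynomial in the
variables `y₁,…,yₙ` (the `Sum.inl` variables) of `ℝ[y₁,…,yₙ,e¹,…,eⁿ]`. -/
noncomputable def HI {n : ℕ} (I : Fin n → ℕ) : MvPolynomial (Fin n ⊕ Fin n) ℝ :=
  ∏ i, Polynomial.aeval (X (Sum.inl i)) (physHermite (I i))

/-- The monomial `e^J = (e¹)^{j₁}⋯(eⁿ)^{jₙ}` in the symmetric-algebra variables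
(the `Sum.inr` variables), spanning `S^p = Sym^p((ℝⁿ)*)` for `|J| = p`. -/
noncomputable def eJ {n : ℕ} (J : Fin n → ℕ) : MvPolynomial (Fin n ⊕ Fin n) ℝ :=
  ∏ i, (X (Sum.inr i) : MvPolynomial (Fin n ⊕ Fin n) ℝ) ^ (J i)

/-- exponent of `e^J` -/
noncomputable def d0 {n : ℕ} (J : Fin n → ℕ) : (Fin n ⊕ Fin n) →₀ ℕ :=
  Finsupp.equivFunOnFinite.symm (Sum.elim 0 J)

/-- exponent of `y_k e^J` -/
noncomputable def d1 {n : ℕ} (k : Fin n) (J : Fin n → ℕ) : (Fin n ⊕ Fin n) →₀ ℕ :=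
  Finsupp.equivFunOnFinite.symm (Sum.elim (Pi.single k 1) J)

@[simp] lemma d0_inl {n : ℕ} (J : Fin n → ℕ) (i : Fin n) : d0 J (Sum.inl i) = 0 := rfl
@[simp] lemma d0_inr {n : ℕ} (J : Fin n → ℕ) (i : Fin n) : d0 J (Sum.inr i) = J i := rfl
@[simp] lemma d1_inl {n : ℕ} (k : Fin n) (J : Fin n → ℕ) (i : Fin n) :
    d1 k J (Sum.inl i) = Pi.single (M := fun _ => ℕ) k 1 i := rfl
@[simp] lemma d1_inr {n : ℕ} (k : Fin n) (J : Fin n → ℕ) (i : Fin n) :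
    d1 k J (Sum.inr i) = J i := rfl

lemma monomial_one_eq {n : ℕ} (d : (Fin n ⊕ Fin n) →₀ ℕ) :
    (monomial d (1 : ℝ) : MvPolynomial (Fin n ⊕ Fin n) ℝ) = ∏ s, X s ^ d s := by
  rw [monomial_eq, map_one, one_mul, Finsupp.prod_pow]

lemma eJ_eq {n : ℕ} (J : Fin n → ℕ) : eJ J = monomial (d0 J) (1 : ℝ) := by
  rw [monomial_one_eq, Fintype.prod_sum_type]
  simp [eJ]

lemma X_mul_eJ {n : ℕ} (k : Fin n) (J : Fin n → ℕ) :
    X (Sum.inl k) * eJ J = monomial (d1 k J) (1 : ℝ) := by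
  rw [monomial_one_eq, Fintype.prod_sum_type]
  have h1 : (∏ i, (X (Sum.inl i) : MvPolynomial (Fin n ⊕ Fin n) ℝ) ^ d1 k J (Sum.inl i))
      = X (Sum.inl k) := by
    rw [Finset.prod_eq_single k]
    · simp
    · intro i _ hik; simp [Pi.single_eq_of_ne hik]
    · simp
  rw [h1]; rfl

lemma physHermite_zero : physHermite 0 = 1 := rfl
lemma physHermite_one : physHermite 1 = 2 * Polynomial.X := by
  simp [physHermite]

lemma HI_zero {n : ℕ} : HI (0 : Fin n → ℕ) = 1 := by
  simp [HI, physHermite_zero]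

lemma HI_single {n : ℕ} (k : Fin n) :
    HI (Pi.single k 1) = 2 * X (Sum.inl k) := by
  unfold HI
  rw [Finset.prod_eq_single k]
  · rw [Pi.single_eq_same, physHermite_one]; simp [map_ofNat]
  · intro i _ hik; rw [Pi.single_eq_of_ne hik, physHermite_zero]; simp
  · simp

lemma gen_eq {n : ℕ} (k : Fin n) (J : Fin n → ℕ) :
    HI (Pi.single k 1) * eJ J = (2 : ℝ) • monomial (d1 k J) (1 : ℝ) := by
  rw [HI_single, mul_assoc, X_mul_eJ, smul_monomial, smul_eq_mul, mul_one,
    (map_ofNat C 2).symm, C_mul_monomial, mul_one]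

/-- The index set of tuples of total degree `p`. -/
def Tset (n p : ℕ) : Type := {J : Fin n → ℕ // ∑ i, J i = p}

noncomputable instance (n p : ℕ) : Fintype (Tset n p) :=
  Fintype.ofFinset (Finset.Nat.antidiagonalTuple n p)
    (fun _ => Finset.Nat.mem_antidiagonalTuple)

/-- `Tset n p` is equivalent to `Sym (Fin n) p`. -/
noncomputable def TsetEquiv (n p : ℕ) : Tset n p ≃ Sym (Fin n) p where
  toFun J := ⟨Finsupp.toMultiset (Finsupp.equivFunOnFinite.symm J.1), by
    rw [Finsupp.card_toMultiset, Finsupp.sum_fintype]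
    · exact J.2
    · intro; rfl⟩
  invFun m := ⟨fun i => Multiset.count i m.1, by
    have h : ∑ i, Multiset.count i m.1
        = (Multiset.toFinsupp m.1).sum fun _ => id := by
      rw [Finsupp.sum_fintype]
      · simp
      · intro; rfl
    rw [h, Multiset.toFinsupp_sum_eq, m.2]⟩
  left_inv J := by
    apply Subtype.ext; funext i
    exact Finsupp.count_toMultiset _ i
  right_inv m := by
    apply Subtype.ext
    show Finsupp.toMultiset (Finsupp.equivFunOnFinite.symm fun i => Multiset.count i m.1) = m.1
    have : Finsupp.equivFunOnFinite.symm (fun i => Multiset.count i m.1)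
        = Multiset.toFinsupp m.1 := by
      ext a; simp
    rw [this, Multiset.toFinsupp_toMultiset]

lemma Tset_card (n p : ℕ) : Fintype.card (Tset n p) = (n + p - 1).choose p := by
  rw [Fintype.card_congr (TsetEquiv n p), Sym.card_sym_eq_choose, Fintype.card_fin]

/-- `𝓗^q ⊗ S^p`: the span of the vectors `H_I e^J` with `|I| = q`, `|J| = p`. -/
noncomputable def HS (n q p : ℕ) : Submodule ℝ (MvPolynomial (Fin n ⊕ Fin n) ℝ) :=
  Submodule.span ℝ
    {x | ∃ I J : Fin n → ℕ, (∑ i, I i) = q ∧ (∑ i, J i) = p ∧ x = HI I * eJ J}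

lemma exists_single_of_sum_eq_one {n : ℕ} {I : Fin n → ℕ} (h : ∑ i, I i = 1) :
    ∃ k, I = Pi.single k 1 := by
  have hne : ∃ k, I k ≠ 0 := by
    by_contra hc
    push_neg at hc
    simp [Finset.sum_eq_zero (fun i _ => hc i)] at h
  obtain ⟨k, hk⟩ := hne
  have hsplit : I k + ∑ i ∈ Finset.univ.erase k, I i = 1 := by
    rw [Finset.add_sum_erase _ _ (Finset.mem_univ k)]; exact h
  have hIk : I k = 1 := by omega
  have hz : ∀ i ∈ Finset.univ.erase k, I i = 0 := by
    rw [← Finset.sum_eq_zero_iff]; omega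
  refine ⟨k, funext fun i => ?_⟩
  by_cases hik : i = k
  · subst hik; rw [hIk, Pi.single_eq_same]
  · rw [Pi.single_eq_of_ne hik, hz i (Finset.mem_erase.2 ⟨hik, Finset.mem_univ i⟩)]

lemma exists_zero_of_sum_eq_zero {n : ℕ} {I : Fin n → ℕ} (h : ∑ i, I i = 0) :
    I = 0 := by
  funext i
  exact Finset.sum_eq_zero_iff.1 h i (Finset.mem_univ i)

@[simp] lemma sum_pi_single_one {n : ℕ} (k : Fin n) :
    ∑ i, Pi.single (M := fun _ => ℕ) k 1 i = 1 := by
  simp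

/-- basis family of `𝓗¹⊗S²` -/
noncomputable def bbf (n : ℕ) : Fin n × Tset n 2 → MvPolynomial (Fin n ⊕ Fin n) ℝ :=
  fun t => HI (Pi.single t.1 1) * eJ t.2.1

/-- basis family of `𝓗⁰⊗S³` -/
noncomputable def ccf (n : ℕ) : Tset n 3 → MvPolynomial (Fin n ⊕ Fin n) ℝ :=
  fun M => eJ M.1

lemma HS12_eq (n : ℕ) : HS n 1 2 = Submodule.span ℝ (Set.range (bbf n)) := by
  unfold HS
  congr 1
  ext x
  constructor
  · rintro ⟨I, J, hI, hJ, rfl⟩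
    obtain ⟨k, rfl⟩ := exists_single_of_sum_eq_one hI
    exact ⟨(k, ⟨J, hJ⟩), rfl⟩
  · rintro ⟨⟨k, ⟨J, hJ⟩⟩, rfl⟩
    exact ⟨Pi.single k 1, J, by simp, hJ, rfl⟩

lemma HS03_eq (n : ℕ) : HS n 0 3 = Submodule.span ℝ (Set.range (ccf n)) := by
  unfold HS
  congr 1
  ext x
  constructor
  · rintro ⟨I, J, hI, hJ, rfl⟩
    rw [exists_zero_of_sum_eq_zero hI, HI_zero, one_mul]
    exact ⟨⟨J, hJ⟩, rfl⟩
  · rintro ⟨⟨J, hJ⟩, rfl⟩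
    exact ⟨0, J, by simp, hJ, by rw [HI_zero, one_mul]; rfl⟩

lemma HS01_eq (n : ℕ) :
    HS n 0 1 = Submodule.span ℝ (Set.range fun ℓ : Fin n => (X (Sum.inr ℓ) :
      MvPolynomial (Fin n ⊕ Fin n) ℝ)) := by
  unfold HS
  congr 1
  ext x
  constructor
  · rintro ⟨I, J, hI, hJ, rfl⟩
    rw [exists_zero_of_sum_eq_zero hI, HI_zero, one_mul]
    obtain ⟨ℓ, rfl⟩ := exists_single_of_sum_eq_one hJ
    refine ⟨ℓ, ?_⟩
    unfold eJ
    rw [Finset.prod_eq_single ℓ]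
    · simp
    · intro i _ hik; rw [Pi.single_eq_of_ne hik, pow_zero]
    · simp
  · rintro ⟨ℓ, rfl⟩
    refine ⟨0, Pi.single ℓ 1, by simp, by simp, ?_⟩
    rw [HI_zero, one_mul]
    unfold eJ
    rw [Finset.prod_eq_single ℓ]
    · simp
    · intro i _ hik; rw [Pi.single_eq_of_ne hik, pow_zero]
    · simp

lemma d1_injective (n : ℕ) :
    Function.Injective (fun t : Fin n × Tset n 2 => d1 t.1 t.2.1) := by
  rintro ⟨k, ⟨J, hJ⟩⟩ ⟨k', ⟨J', hJ'⟩⟩ h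
  simp only at h
  have hk : k = k' := by
    have := DFunLike.congr_fun h (Sum.inl k)
    simp only [d1_inl, Pi.single_eq_same] at this
    by_contra hkk
    rw [Pi.single_eq_of_ne hkk] at this
    exact one_ne_zero this
  have hJJ : J = J' := funext fun i => DFunLike.congr_fun h (Sum.inr i)
  subst hk; subst hJJ; rfl

lemma indep_monomial_family {n : ℕ} {ι : Type*} (d : ι → ((Fin n ⊕ Fin n) →₀ ℕ))
    (hd : Function.Injective d) :
    LinearIndependent ℝ fun t => (monomial (d t) (1 : ℝ) :
      MvPolynomial (Fin n ⊕ Fin n) ℝ) :=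
  (basisMonomials _ ℝ).linearIndependent.comp d hd

lemma indep_bbf (n : ℕ) : LinearIndependent ℝ (bbf n) := by
  have h := ((indep_monomial_family _ (d1_injective n)).units_smul
    (fun _ => Units.mk0 (2 : ℝ) two_ne_zero))
  convert h using 1
  funext t
  show HI (Pi.single t.1 1) * eJ t.2.1 = _
  rw [gen_eq]
  rfl

lemma indep_ccf (n : ℕ) : LinearIndependent ℝ (ccf n) := by
  have hd : Function.Injective (fun M : Tset n 3 => d0 M.1) := by
    rintro ⟨J, hJ⟩ ⟨J', hJ'⟩ h
    simp only at h
    exact Subtype.ext (funext fun i => DFunLike.congr_fun h (Sum.inr i))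
  have h := indep_monomial_family _ hd
  convert h using 1
  funext M
  exact eJ_eq M.1

lemma indep_X_inr (n : ℕ) :
    LinearIndependent ℝ fun ℓ : Fin n => (X (Sum.inr ℓ) :
      MvPolynomial (Fin n ⊕ Fin n) ℝ) := by
  have hd : Function.Injective (fun ℓ : Fin n =>
      Finsupp.single (Sum.inr ℓ : Fin n ⊕ Fin n) (1 : ℕ)) :=
    fun a b h => Sum.inr_injective (Finsupp.single_left_injective one_ne_zero h)
  exact indep_monomial_family _ hd

lemma finrank_HS12 (n : ℕ) :
    Module.finrank ℝ (HS n 1 2) = n * (n + 1).choose 2 := by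
  rw [HS12_eq, finrank_span_eq_card (indep_bbf n), Fintype.card_prod, Fintype.card_fin,
    Tset_card]
  norm_num

lemma finrank_HS03 (n : ℕ) :
    Module.finrank ℝ (HS n 0 3) = (n + 2).choose 3 := by
  rw [HS03_eq, finrank_span_eq_card (indep_ccf n), Tset_card]
  norm_num

lemma finrank_HS01 (n : ℕ) :
    Module.finrank ℝ (HS n 0 1) = n := by
  rw [HS01_eq, finrank_span_eq_card (indep_X_inr n), Fintype.card_fin]

/-- The operator `Ac = Σ_k A_k ⊗ c_k`, where `A_k = (1/2)∂_{y_k}` and `c_k` is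
symmetric multiplication by `e^k`. -/
noncomputable def acL (n : ℕ) :
    MvPolynomial (Fin n ⊕ Fin n) ℝ →ₗ[ℝ] MvPolynomial (Fin n ⊕ Fin n) ℝ :=
  ∑ k : Fin n, (1 / 2 : ℝ) •
    ((pderiv (Sum.inl k)).toLinearMap ∘ₗ LinearMap.mulLeft ℝ (X (Sum.inr k)))

/-- The operator `Aa = Σ_k A_k ⊗ a_k`, where `A_k = (1/2)∂_{y_k}` and `a_k = ∂_{e_k}` is
contraction with `e_k`. -/
noncomputable def aaL (n : ℕ) :
    MvPolynomial (Fin n ⊕ Fin n) ℝ →ₗ[ℝ] MvPolynomial (Fin n ⊕ Fin n) ℝ :=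
  ∑ k : Fin n, (1 / 2 : ℝ) •
    ((pderiv (Sum.inl k)).toLinearMap ∘ₗ (pderiv (Sum.inr k)).toLinearMap)

lemma X_mul_monomial' {n : ℕ} (s : Fin n ⊕ Fin n) (d : (Fin n ⊕ Fin n) →₀ ℕ) :
    (X s : MvPolynomial (Fin n ⊕ Fin n) ℝ) * monomial d 1
      = monomial (Finsupp.single s 1 + d) 1 := by
  rw [X, monomial_mul, one_mul]

lemma acL_exponent {n : ℕ} (k : Fin n) (J : Fin n → ℕ) :
    Finsupp.single (Sum.inr k : Fin n ⊕ Fin n) 1 + d1 k J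
        - Finsupp.single (Sum.inl k) 1 = d0 (J + Pi.single k 1) := by
  ext s
  rcases s with i | i <;> by_cases h : i = k
  · subst h; simp [Finsupp.tsub_apply, Finsupp.single_apply]
  · simp [Finsupp.tsub_apply, Finsupp.single_apply, Pi.single_eq_of_ne h, h, Ne.symm h]
  · subst h; simp [Finsupp.tsub_apply, Finsupp.single_apply]; omega
  · simp [Finsupp.tsub_apply, Finsupp.single_apply, Pi.single_eq_of_ne h, h, Ne.symm h]

lemma aaL_exponent {n : ℕ} (k : Fin n) (J : Fin n → ℕ) :
    d1 k J - Finsupp.single (Sum.inr k : Fin n ⊕ Fin n) 1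
        - Finsupp.single (Sum.inl k) 1 = d0 (J - Pi.single k 1) := by
  ext s
  rcases s with i | i <;> by_cases h : i = k
  · subst h; simp [Finsupp.tsub_apply, Finsupp.single_apply]
  · simp [Finsupp.tsub_apply, Finsupp.single_apply, Pi.single_eq_of_ne h, h, Ne.symm h]
  · subst h; simp [Finsupp.tsub_apply, Finsupp.single_apply]
  · simp [Finsupp.tsub_apply, Finsupp.single_apply, Pi.single_eq_of_ne h, h, Ne.symm h]

lemma acL_apply_monomial {n : ℕ} (k : Fin n) (J : Fin n → ℕ) :
    acL n (monomial (d1 k J) (1 : ℝ))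
      = (1 / 2 : ℝ) • monomial (d0 (J + Pi.single k 1)) (1 : ℝ) := by
  unfold acL
  rw [LinearMap.sum_apply, Finset.sum_eq_single k]
  · simp only [LinearMap.smul_apply, LinearMap.coe_comp, Function.comp_apply,
      LinearMap.mulLeft_apply, Derivation.coeFn_coe]
    rw [X_mul_monomial', pderiv_monomial]
    have hco : (((Finsupp.single (Sum.inr k) 1 : (Fin n ⊕ Fin n) →₀ ℕ) + d1 k J) (Sum.inl k) : ℝ)
        = 1 := by
      simp [Finsupp.single_apply]
    rw [acL_exponent, hco, one_mul]
  · intro m _ hmk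
    simp only [LinearMap.smul_apply, LinearMap.coe_comp, Function.comp_apply,
      LinearMap.mulLeft_apply, Derivation.coeFn_coe]
    rw [X_mul_monomial', pderiv_monomial]
    have hco : ((((Finsupp.single (Sum.inr m) 1 : (Fin n ⊕ Fin n) →₀ ℕ) + d1 k J) (Sum.inl m)) : ℝ)
        = 0 := by
      simp [Finsupp.single_apply, Pi.single_apply, hmk]
    rw [hco, one_mul, monomial_zero, smul_zero]
  · intro h; exact absurd (Finset.mem_univ k) h

lemma aaL_apply_monomial {n : ℕ} (k : Fin n) (J : Fin n → ℕ) :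
    aaL n (monomial (d1 k J) (1 : ℝ))
      = ((J k : ℝ) / 2) • monomial (d0 (J - Pi.single k 1)) (1 : ℝ) := by
  unfold aaL
  rw [LinearMap.sum_apply, Finset.sum_eq_single k]
  · simp only [LinearMap.smul_apply, LinearMap.coe_comp, Function.comp_apply,
      Derivation.coeFn_coe]
    rw [pderiv_monomial, pderiv_monomial]
    have hco1 : ((d1 k J) (Sum.inr k) : ℝ) = (J k : ℝ) := by simp
    have hco2 : (((d1 k J - (Finsupp.single (Sum.inr k) 1 : (Fin n ⊕ Fin n) →₀ ℕ)) (Sum.inl k)) : ℝ)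
        = 1 := by
      simp [Finsupp.tsub_apply, Finsupp.single_apply]
    rw [aaL_exponent, hco1, hco2, one_mul, mul_one]
    rw [smul_monomial, smul_monomial]
    congr 1
    simp only [smul_eq_mul]
    ring
  · intro m _ hmk
    simp only [LinearMap.smul_apply, LinearMap.coe_comp, Function.comp_apply,
      Derivation.coeFn_coe]
    rw [pderiv_monomial, pderiv_monomial]
    have hco : (((d1 k J - (Finsupp.single (Sum.inr m) 1 : (Fin n ⊕ Fin n) →₀ ℕ)) (Sum.inl m)) : ℝ)
        = 0 := by
      simp [Finsupp.tsub_apply, Finsupp.single_apply, Pi.single_apply, hmk]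
    rw [hco, mul_zero, monomial_zero, smul_zero]
  · intro h; exact absurd (Finset.mem_univ k) h

lemma acL_gen {n : ℕ} (k : Fin n) (J : Fin n → ℕ) :
    acL n (HI (Pi.single k 1) * eJ J) = eJ (J + Pi.single k 1) := by
  rw [gen_eq, map_smul, acL_apply_monomial, eJ_eq, smul_smul]
  norm_num

lemma aaL_gen {n : ℕ} (k : Fin n) (J : Fin n → ℕ) :
    aaL n (HI (Pi.single k 1) * eJ J) = (J k : ℝ) • eJ (J - Pi.single k 1) := by
  rw [gen_eq, map_smul, aaL_apply_monomial, eJ_eq, smul_smul]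
  congr 1
  ring

lemma exists_ne_zero_of_sum {n p : ℕ} {M : Fin n → ℕ} (h : ∑ i, M i = p) (hp : p ≠ 0) :
    ∃ k, M k ≠ 0 := by
  by_contra hc
  push_neg at hc
  simp only [Finset.sum_eq_zero (fun i _ => hc i)] at h
  exact hp h.symm

lemma sub_single_add {n : ℕ} {M : Fin n → ℕ} {k : Fin n} (hk : M k ≠ 0) :
    (M - Pi.single k 1) + Pi.single k 1 = M := by
  funext i
  by_cases h : i = k
  · subst h
    simp only [Pi.add_apply, Pi.sub_apply, Pi.single_eq_same]
    omega
  · simp [Pi.single_eq_of_ne h]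

lemma sum_add_single {n : ℕ} (J : Fin n → ℕ) (k : Fin n) :
    ∑ i, (J + Pi.single k 1 : Fin n → ℕ) i = (∑ i, J i) + 1 := by
  simp [Finset.sum_add_distrib]

lemma sum_sub_single {n p : ℕ} {M : Fin n → ℕ} {k : Fin n} (hk : M k ≠ 0)
    (h : ∑ i, M i = p) : ∑ i, (M - Pi.single k 1 : Fin n → ℕ) i = p - 1 := by
  have h2 := congrArg (fun f : Fin n → ℕ => ∑ i, f i) (sub_single_add hk)
  rw [sum_add_single] at h2
  omega

lemma eJ_single {n : ℕ} (ℓ : Fin n) :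
    eJ (Pi.single ℓ 1) = (X (Sum.inr ℓ) : MvPolynomial (Fin n ⊕ Fin n) ℝ) := by
  unfold eJ
  rw [Finset.prod_eq_single ℓ]
  · simp
  · intro i _ hik; rw [Pi.single_eq_of_ne hik, pow_zero]
  · simp

lemma gen_mem_HS12 {n : ℕ} (k : Fin n) {J : Fin n → ℕ} (hJ : ∑ i, J i = 2) :
    HI (Pi.single k 1) * eJ J ∈ HS n 1 2 :=
  Submodule.subset_span ⟨Pi.single k 1, J, by simp, hJ, rfl⟩

lemma eJ_mem_HS0 {n p : ℕ} {J : Fin n → ℕ} (hJ : ∑ i, J i = p) :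
    eJ J ∈ HS n 0 p :=
  Submodule.subset_span ⟨0, J, by simp, hJ, by rw [HI_zero, one_mul]⟩

lemma map_acL_HS12 (n : ℕ) :
    Submodule.map (acL n) (HS n 1 2) = HS n 0 3 := by
  apply le_antisymm
  · rw [HS12_eq, Submodule.map_span, Submodule.span_le]
    rintro x ⟨y, ⟨⟨k, ⟨J, hJ⟩⟩, rfl⟩, rfl⟩
    show acL n (HI (Pi.single k 1) * eJ J) ∈ HS n 0 3
    rw [acL_gen]
    exact eJ_mem_HS0 (by rw [sum_add_single, hJ])
  · rw [HS03_eq, Submodule.span_le]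
    rintro x ⟨⟨M, hM⟩, rfl⟩
    obtain ⟨k, hk⟩ := exists_ne_zero_of_sum hM (by norm_num)
    refine Submodule.mem_map.2 ⟨HI (Pi.single k 1) * eJ (M - Pi.single k 1),
      gen_mem_HS12 k (sum_sub_single hk hM), ?_⟩
    rw [acL_gen, sub_single_add hk]
    rfl

lemma map_aaL_HS12_le (n : ℕ) :
    Submodule.map (aaL n) (HS n 1 2) ≤ HS n 0 1 := by
  rw [HS12_eq, Submodule.map_span, Submodule.span_le]
  rintro x ⟨y, ⟨⟨k, ⟨J, hJ⟩⟩, rfl⟩, rfl⟩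
  show aaL n (HI (Pi.single k 1) * eJ J) ∈ HS n 0 1
  rw [aaL_gen]
  by_cases hk : J k = 0
  · rw [hk]; simp
  · exact Submodule.smul_mem _ _ (eJ_mem_HS0 (sum_sub_single hk hJ))

lemma map_aaL_D (n : ℕ) (hn : 2 ≤ n) :
    Submodule.map (aaL n) (HS n 1 2 ⊓ LinearMap.ker (acL n)) = HS n 0 1 := by
  apply le_antisymm
  · exact le_trans (Submodule.map_mono inf_le_left) (map_aaL_HS12_le n)
  · rw [HS01_eq, Submodule.span_le]
    rintro x ⟨ℓ, rfl⟩
    obtain ⟨k, hkℓ⟩ := Fintype.exists_ne_of_one_lt_card (by rw [Fintype.card_fin]; omega) ℓ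
    set J1 : Fin n → ℕ := Pi.single k 1 + Pi.single ℓ 1 with hJ1def
    set J2 : Fin n → ℕ := Pi.single k 2 with hJ2def
    have hJ1 : ∑ i, J1 i = 2 := by simp [hJ1def, Finset.sum_add_distrib]
    have hJ2 : ∑ i, J2 i = 2 := by simp [hJ2def]
    set u := HI (Pi.single k 1) * eJ J1 - HI (Pi.single ℓ 1) * eJ J2 with hu
    have humem : u ∈ HS n 1 2 :=
      sub_mem (gen_mem_HS12 k hJ1) (gen_mem_HS12 ℓ hJ2)
    have hexp : J1 + Pi.single k 1 = J2 + Pi.single ℓ 1 := by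
      funext i
      simp only [hJ1def, hJ2def, Pi.add_apply, Pi.single_apply]
      split <;> split <;> omega
    have hker : acL n u = 0 := by
      rw [hu, map_sub, acL_gen, acL_gen, hexp, sub_self]
    have haa : aaL n u = X (Sum.inr ℓ) := by
      rw [hu, map_sub, aaL_gen, aaL_gen]
      have h1 : J1 k = 1 := by
        simp [hJ1def, Pi.single_eq_of_ne hkℓ]
      have h2 : J2 ℓ = 0 := by
        simp [hJ2def, Pi.single_eq_of_ne (Ne.symm hkℓ)]
      have h3 : J1 - Pi.single k 1 = Pi.single ℓ 1 := by
        funext i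
        simp only [hJ1def, Pi.sub_apply, Pi.add_apply, Pi.single_apply]
        have : ¬ (k = ℓ) := hkℓ
        split <;> split <;> simp_all <;> omega
      rw [h1, h2, h3, eJ_single]
      simp
    exact Submodule.mem_map.2 ⟨u, ⟨humem, LinearMap.mem_ker.2 hker⟩, haa⟩

lemma fd_HS12 (n : ℕ) : FiniteDimensional ℝ (HS n 1 2) := by
  rw [HS12_eq]
  exact Module.Finite.of_basis (Module.Basis.span (indep_bbf n))

lemma finrank_comap_inf {R M : Type*} [Field R] [AddCommGroup M] [Module R M]
    (p q : Submodule R M) :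
    Module.finrank R (Submodule.comap p.subtype q) = Module.finrank R (p ⊓ q : Submodule R M) := by
  have h : Submodule.comap p.subtype q = Submodule.comap p.subtype (p ⊓ q) := by
    rw [Submodule.comap_inf, Submodule.comap_subtype_self, top_inf_eq]
  rw [h]
  exact (Submodule.comapSubtypeEquivOfLe inf_le_left).finrank_eq

lemma finrank_kerAc (n : ℕ) :
    Module.finrank ℝ ↥(HS n 1 2 ⊓ LinearMap.ker (acL n)) =
      n * (n + 1).choose 2 - (n + 2).choose 3 := by
  haveI := fd_HS12 n
  have hrn := LinearMap.finrank_range_add_finrank_ker ((acL n).domRestrict (HS n 1 2))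
  rw [LinearMap.range_domRestrict, map_acL_HS12, LinearMap.ker_domRestrict,
    finrank_comap_inf, finrank_HS03, finrank_HS12] at hrn
  omega

lemma finrank_K12 (n : ℕ) (hn : 2 ≤ n) :
    Module.finrank ℝ
        ↥(HS n 1 2 ⊓ LinearMap.ker (aaL n) ⊓ LinearMap.ker (acL n)) =
      n * (n + 1).choose 2 - (n + 2).choose 3 - n := by
  haveI := fd_HS12 n
  haveI : FiniteDimensional ℝ ↥(HS n 1 2 ⊓ LinearMap.ker (acL n)) :=
    Submodule.finiteDimensional_of_le inf_le_left
  have hrn := LinearMap.finrank_range_add_finrank_ker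
    ((aaL n).domRestrict (HS n 1 2 ⊓ LinearMap.ker (acL n)))
  rw [LinearMap.range_domRestrict, map_aaL_D n hn, LinearMap.ker_domRestrict,
    finrank_comap_inf, finrank_HS01, finrank_kerAc] at hrn
  have heq : HS n 1 2 ⊓ LinearMap.ker (acL n) ⊓ LinearMap.ker (aaL n)
      = HS n 1 2 ⊓ LinearMap.ker (aaL n) ⊓ LinearMap.ker (acL n) := by
    rw [inf_right_comm]
  rw [heq] at hrn
  -- need surjectivity bound: range dim n ≤ dim D requires n·C − C ≥ n; get from hrn
  omega

lemma n_one_case :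
    HS 1 1 2 ⊓ LinearMap.ker (aaL 1) ⊓ LinearMap.ker (acL 1) = ⊥ := by
  rw [eq_bot_iff]
  rintro x ⟨⟨hxHS, hxaa⟩, -⟩
  have hgen : {y : MvPolynomial (Fin 1 ⊕ Fin 1) ℝ |
      ∃ I J : Fin 1 → ℕ, (∑ i, I i) = 1 ∧ (∑ i, J i) = 2 ∧ y = HI I * eJ J}
      = {HI (Pi.single (0 : Fin 1) 1) * eJ (fun _ => 2)} := by
    ext y
    constructor
    · rintro ⟨I, J, hI, hJ, rfl⟩
      have hI' : I = Pi.single (0 : Fin 1) 1 := by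
        funext i
        have : i = 0 := Subsingleton.elim _ _
        subst this
        simpa using hI
      have hJ' : J = fun _ => 2 := by
        funext i
        have : i = 0 := Subsingleton.elim _ _
        subst this
        simpa using hJ
      rw [hI', hJ']
      rfl
    · rintro rfl
      exact ⟨Pi.single 0 1, fun _ => 2, by simp, by simp, rfl⟩
  rw [show HS 1 1 2 = Submodule.span ℝ {HI (Pi.single (0 : Fin 1) 1) * eJ (fun _ => 2)} by
    unfold HS; rw [hgen]] at hxHS
  obtain ⟨c, rfl⟩ := Submodule.mem_span_singleton.1 hxHS
  have haa : aaL 1 (HI (Pi.single (0 : Fin 1) 1) * eJ (fun _ => 2)) =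
      (2 : ℝ) • eJ (fun _ => 1) := by
    rw [aaL_gen]
    have harg : ((fun _ => 2) - Pi.single (0 : Fin 1) 1 : Fin 1 → ℕ) = fun _ => 1 := by
      funext i
      have hi : i = (0 : Fin 1) := Subsingleton.elim _ _
      subst hi
      simp
    rw [harg]
    norm_num
  have h0 := LinearMap.mem_ker.1 hxaa
  rw [map_smul, haa, smul_smul, eJ_eq, smul_monomial, smul_eq_mul, mul_one,
    monomial_eq_zero] at h0
  have hc : c = 0 := by linarith [h0]
  rw [hc, zero_smul]
  exact Submodule.zero_mem ⊥

/-- for `n ≥ 2`, `ker Ac ⊆ 𝓗¹⊗S²` has dimension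
`n·C(n+1,2) − C(n+2,3)` and `K^{1,2} = ker Aa ∩ ker Ac ⊆ 𝓗¹⊗S²` has dimension
`n·C(n+1,2) − C(n+2,3) − n`; for `n = 1` the intersection is zero. -/
theorem stmt_15 (n : ℕ) :
    (2 ≤ n →
      Module.finrank ℝ ↥(HS n 1 2 ⊓ LinearMap.ker (acL n)) =
        n * (n + 1).choose 2 - (n + 2).choose 3 ∧
      Module.finrank ℝ
          ↥(HS n 1 2 ⊓ LinearMap.ker (aaL n) ⊓ LinearMap.ker (acL n)) =
        n * (n + 1).choose 2 - (n + 2).choose 3 - n) ∧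
    (n = 1 → HS n 1 2 ⊓ LinearMap.ker (aaL n) ⊓ LinearMap.ker (acL n) = ⊥) := by
  refine ⟨fun hn => ⟨finrank_kerAc n, finrank_K12 n hn⟩, fun hn => ?_⟩
  subst hn
  exact n_one_case
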